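/- Each Arnoux-Rauzy morphism is conjugated to a morphism in Class P_ret: for every Arnoux-Rauzy morphism φ over a finite alphabet A there exist a morphism ψ: A* → A* belonging to Class P_ret and a word x ∈ A* such that ψ(a)x = xφ(a) for every letter a ∈ A. -/

import Mathlib

open List

/-- Apply a morphism (given by its values on letters) to a finite word. -/
def applyM {A : Type*} (φ : A → List A) (v : List A) : List A := v.flatMap φ

/-- The set of occurrences of `w` as a factor of `u`:
indices `i` such that the block of `u` of length `|w|` starting at `i` equals `w`. -/
def occs {A : Type*} [DecidableEq A] (w u : List A) : Finset ℕ :=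
  (Finset.range (u.length + 1)).filter
    (fun i => i + w.length ≤ u.length ∧ (u.drop i).take w.length = w)

/-- A morphism `φ` belongs to Class `P_ret` with marker `w` if it is injective on
letters, `w` is a palindrome, and for each letter `a` the word `φ(a)w` is a palindrome
in which `w` occurs exactly twice, namely as a prefix (position `0`) and as a suffix
(position `|φ(a)|`, distinct from `0`). -/
def IsPretWithMarker {A : Type*} [DecidableEq A] (φ : A → List A) (w : List A) : Prop :=
  Function.Injective φ ∧ w.reverse = w ∧
    ∀ a : A, (φ a ++ w).reverse = φ a ++ w ∧
      occs w (φ a ++ w) = {0, (φ a).length} ∧ (φ a).length ≠ 0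

/-- The block of length `len` of the infinite word `u` starting at position `i`. -/
def factorAt {A : Type*} (u : ℕ → A) (i len : ℕ) : List A :=
  (List.range len).map fun k => u (i + k)

/-- `i` is an occurrence of the finite word `v` in the infinite word `u`. -/
def OccursAt {A : Type*} (u : ℕ → A) (v : List A) (i : ℕ) : Prop :=
  factorAt u i v.length = v

/-- `v` belongs to the language of the infinite word `u`, i.e. `v` is a factor of `u`. -/
def InLang {A : Type*} (u : ℕ → A) (v : List A) : Prop := ∃ i, OccursAt u v i

/-- The image `φ(u) = φ(u₀)φ(u₁)φ(u₂)⋯` of an infinite word `u` under a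
(non-erasing) morphism `φ`, as an infinite word. -/
def applyInf {A : Type*} (φ : A → List A) (u : ℕ → A) (n : ℕ) : A :=
  (((List.range (n + 1)).flatMap fun i => φ (u i))).getD n (u 0)

/-- The language of `u` is closed under reversal. -/
def ClosedUnderReversal {A : Type*} (u : ℕ → A) : Prop :=
  ∀ v : List A, InLang u v → InLang u v.reverse

/-- A finite word is rich if its number of palindromic factors (including `ε`)
equals its length plus one. -/
def RichWord {A : Type*} (u : List A) : Prop :=
  {p : List A | p <:+: u ∧ p.reverse = p}.ncard = u.length + 1

/-- An infinite word is rich if all its finite prefixes are rich. -/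
def RichInf {A : Type*} (u : ℕ → A) : Prop := ∀ n : ℕ, RichWord (factorAt u 0 n)

/-- An infinite word is recurrent if each of its factors occurs infinitely often. -/
def Recurrent {A : Type*} (u : ℕ → A) : Prop :=
  ∀ v : List A, InLang u v → ∀ N : ℕ, ∃ i, N ≤ i ∧ OccursAt u v i

/-- `r` is a return word to `w` in the infinite word `u`: `wr ∈ L(u)` and `w`
occurs in `wr` exactly twice, as a prefix and as a suffix. -/
def IsReturnWord {A : Type*} [DecidableEq A] (u : ℕ → A) (w r : List A) : Prop :=
  r ≠ [] ∧ InLang u (w ++ r) ∧ occs w (w ++ r) = {0, r.length}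

/-- Left extensions of `x` in the language of `u`. -/
def leftExt {A : Type*} (u : ℕ → A) (x : List A) : Set A := {a | InLang u (a :: x)}

/-- Right extensions of `x` in the language of `u`. -/
def rightExt {A : Type*} (u : ℕ → A) (x : List A) : Set A := {b | InLang u (x ++ [b])}

/-- Bi-extensions of `x` in the language of `u`. -/
def biExt {A : Type*} (u : ℕ → A) (x : List A) : Set (A × A) :=
  {p | InLang u (p.1 :: (x ++ [p.2]))}

/-- `x` is bispecial in `u`. -/
def Bispecial {A : Type*} (u : ℕ → A) (x : List A) : Prop :=
  2 ≤ (leftExt u x).ncard ∧ 2 ≤ (rightExt u x).ncard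

/-- The bilateral order `b_u(x) = #B_u(x) − #L_u(x) − #R_u(x) + 1`. -/
noncomputable def bilateralOrder {A : Type*} (u : ℕ → A) (x : List A) : ℤ :=
  ((biExt u x).ncard : ℤ) - (leftExt u x).ncard - (rightExt u x).ncard + 1

/-- The number of palindromic extensions of `x` in `u`. -/
noncomputable def pext {A : Type*} (u : ℕ → A) (x : List A) : ℕ :=
  {a | InLang u (a :: (x ++ [a]))}.ncard

/-- Arnoux-Rauzy morphisms: the monoid of morphisms generated by permutations of the
alphabet and by the elementary morphisms `ψ_a : a ↦ a, b ↦ ab` and `ψ̄_a : a ↦ a, b ↦ ba`. -/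
inductive IsAR {A : Type*} [DecidableEq A] : (A → List A) → Prop
  | perm (π : Equiv.Perm A) : IsAR (fun a => [π a])
  | psiL (a : A) : IsAR (fun b => if b = a then [a] else [a, b])
  | psiR (a : A) : IsAR (fun b => if b = a then [a] else [b, a])
  | comp {φ ψ : A → List A} : IsAR φ → IsAR ψ → IsAR (fun a => applyM φ (ψ a))

/-- The `k`-th power `φ^k` of a morphism. -/
def powM {A : Type*} (φ : A → List A) : ℕ → A → List A
  | 0, a => [a]
  | n + 1, a => applyM (powM φ n) (φ a)

/-- A morphism is primitive if some power of it maps every letter to a word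
containing every letter. -/
def PrimitiveM {A : Type*} (φ : A → List A) : Prop :=
  ∃ k : ℕ, ∀ a b : A, b ∈ powM φ k a

/-- A (acyclic) morphism is marked: it has a rightmost conjugate `φR` whose
last-letter map is injective, and a leftmost conjugate `φL` whose first-letter map
is injective. -/
def Marked {A : Type*} (φ : A → List A) : Prop :=
  ∃ (φR φL : A → List A) (x y : List A),
    (∀ a, φ a ++ x = x ++ φR a) ∧
    (∀ a, φL a ++ y = y ++ φ a) ∧
    (∃ a b : A, (φR a).getLast? ≠ (φR b).getLast?) ∧
    (∃ a b : A, (φL a).head? ≠ (φL b).head?) ∧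
    Function.Injective (fun c => (φR c).getLast?) ∧
    Function.Injective (fun c => (φL c).head?)

set_option linter.unusedSectionVars false

section Aux
variable {A : Type*} [DecidableEq A]

def psiW (a b : A) : List A := if b = a then [a] else [a, b]

lemma applyM_nil (φ : A → List A) : applyM φ [] = [] := rfl

lemma applyM_cons (φ : A → List A) (c : A) (v : List A) :
    applyM φ (c :: v) = φ c ++ applyM φ v := by simp [applyM]

lemma applyM_append (φ : A → List A) (u v : List A) :
    applyM φ (u ++ v) = applyM φ u ++ applyM φ v := List.flatMap_append

lemma applyM_assoc (φ ψ : A → List A) (v : List A) :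
    applyM φ (applyM ψ v) = applyM (fun c => applyM φ (ψ c)) v := by
  induction v with
  | nil => rfl
  | cons c v ih => rw [applyM_cons, applyM_cons, applyM_append, ih]

lemma psiW_aa (a : A) : psiW a a = [a] := by simp [psiW]

lemma psiW_ne (a c : A) (h : ¬ c = a) : psiW a c = [a, c] := by simp [psiW, h]

lemma psiW_head (a : A) (u : List A) : ∃ r, applyM (psiW a) u ++ [a] = a :: r := by
  cases u with
  | nil => exact ⟨[], rfl⟩
  | cons c v =>
    by_cases hc : c = a
    · refine ⟨applyM (psiW a) v ++ [a], ?_⟩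
      rw [applyM_cons, hc, psiW_aa]; simp
    · exact ⟨c :: (applyM (psiW a) v ++ [a]), by rw [applyM_cons, psiW_ne a c hc]; simp⟩

lemma psiW_prefix (a : A) : ∀ (w u : List A),
    (applyM (psiW a) w ++ [a]) <+: (applyM (psiW a) u ++ [a]) ↔ w <+: u := by
  intro w
  induction w with
  | nil =>
    intro u
    simp only [applyM_nil, nil_append]
    constructor
    · intro _; exact nil_prefix
    · intro _
      obtain ⟨r, hr⟩ := psiW_head a u
      rw [hr]; exact ⟨r, rfl⟩
  | cons c w ih =>
    intro u
    cases u with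
    | nil =>
      simp only [applyM_nil, nil_append, applyM_cons]
      constructor
      · intro h
        have hl := h.length_le
        exfalso
        by_cases hc : c = a
        · rw [hc, psiW_aa] at hl; simp at hl
        · rw [psiW_ne a c hc] at hl; simp at hl
      · intro h
        exact absurd h (by simp)
    | cons d u =>
      rw [applyM_cons, applyM_cons, append_assoc, append_assoc]
      by_cases hc : c = a
      · by_cases hd : d = a
        · rw [hc, hd, psiW_aa]
          simp only [singleton_append, cons_prefix_cons, ih u]
        · rw [hc, psiW_aa, psiW_ne a d hd, singleton_append, cons_append, cons_append, nil_append]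
          constructor
          · intro h
            rw [cons_prefix_cons] at h
            obtain ⟨r, hr⟩ := psiW_head a w
            rw [hr, cons_prefix_cons] at h
            exact absurd h.2.1 (fun e => hd e.symm)
          · intro h
            rw [cons_prefix_cons] at h
            exact absurd h.1 (fun e => hd e.symm)
      · by_cases hd : d = a
        · rw [hd, psiW_aa, psiW_ne a c hc, singleton_append, cons_append, cons_append, nil_append]
          constructor
          · intro h
            rw [cons_prefix_cons] at h
            obtain ⟨r, hr⟩ := psiW_head a u
            rw [hr, cons_prefix_cons] at h
            exact absurd h.2.1 hc
          · intro h
            rw [cons_prefix_cons] at h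
            exact absurd h.1 hc
        · rw [psiW_ne a c hc, psiW_ne a d hd]
          simp only [cons_append, nil_append, cons_prefix_cons, ih u]
          simp

end Aux

section Aux2
variable {A : Type*} [DecidableEq A]

lemma psiW_boundary (a : A) : ∀ (U : List A) (i : ℕ), i ≤ (applyM (psiW a) U).length →
    (∃ r, (applyM (psiW a) U ++ [a]).drop i = a :: r) →
    ∃ j, j ≤ U.length ∧ i = (applyM (psiW a) (U.take j)).length := by
  intro U
  induction U with
  | nil =>
    intro i hi _
    exact ⟨0, by simp, by simpa [applyM_nil] using hi⟩
  | cons c U ih =>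
    intro i hi hr
    rw [applyM_cons] at hi hr
    by_cases hc : c = a
    · rw [hc, psiW_aa] at hi hr
      rcases i with _ | i
      · exact ⟨0, by simp, by simp [applyM_nil]⟩
      · rw [length_append, length_cons, length_nil] at hi
        rw [singleton_append, cons_append, drop_succ_cons] at hr
        obtain ⟨j, hj, hij⟩ := ih i (by omega) hr
        refine ⟨j + 1, by simpa using hj, ?_⟩
        rw [take_succ_cons, applyM_cons, hc, psiW_aa, length_append, length_cons, length_nil]
        omega
    · rw [psiW_ne a c hc] at hi hr
      rcases i with _ | _ | i
      · exact ⟨0, by simp, by simp [applyM_nil]⟩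
      · exfalso
        obtain ⟨r, hrr⟩ := hr
        simp only [cons_append, nil_append, append_assoc, drop_succ_cons, drop_zero] at hrr
        exact hc (by injection hrr with h1 h2)
      · rw [length_append, length_cons, length_cons, length_nil] at hi
        simp only [cons_append, nil_append, append_assoc, drop_succ_cons] at hr
        obtain ⟨j, hj, hij⟩ := ih i (by omega) hr
        refine ⟨j + 1, by simpa using hj, ?_⟩
        rw [take_succ_cons, applyM_cons, psiW_ne a c hc, length_append, length_cons,
          length_cons, length_nil]
        omega

lemma mem_occs_iff (w u : List A) (i : ℕ) :
    i ∈ occs w u ↔ i ≤ u.length ∧ w <+: u.drop i := by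
  simp only [occs, Finset.mem_filter, Finset.mem_range, Nat.lt_succ_iff]
  constructor
  · rintro ⟨h1, h2, h3⟩
    exact ⟨h1, prefix_iff_eq_take.2 h3.symm⟩
  · rintro ⟨h1, h2⟩
    refine ⟨h1, ?_, (prefix_iff_eq_take.1 h2).symm⟩
    have := h2.length_le
    rw [length_drop] at this
    omega

lemma occs_step (a : A) (w U : List A) (i : ℕ) :
    i ∈ occs (applyM (psiW a) w ++ [a]) (applyM (psiW a) U ++ [a]) ↔
      ∃ j ∈ occs w U, i = (applyM (psiW a) (U.take j)).length := by
  have hsplit : ∀ j : ℕ, applyM (psiW a) U ++ [a] =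
      applyM (psiW a) (U.take j) ++ (applyM (psiW a) (U.drop j) ++ [a]) := by
    intro j
    rw [← append_assoc, ← applyM_append, take_append_drop]
  rw [mem_occs_iff]
  constructor
  · rintro ⟨hile, hpre⟩
    obtain ⟨rt, hrt⟩ := psiW_head a w
    obtain ⟨k, hk⟩ := id hpre
    have hids : ((applyM (psiW a) U ++ [a]).drop i) = a :: (rt ++ k) := by
      rw [← hk, hrt]; simp
    have hib : i ≤ (applyM (psiW a) U).length := by
      by_contra hcon
      have hieq : i = (applyM (psiW a) U ++ [a]).length := by
        rw [length_append] at hile ⊢; simp at hile ⊢; omega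
      rw [hieq, drop_length] at hids
      exact nomatch hids
    obtain ⟨j, hjle, hij⟩ := psiW_boundary a U i hib ⟨rt ++ k, hids⟩
    refine ⟨j, ?_, hij⟩
    rw [mem_occs_iff]
    refine ⟨hjle, ?_⟩
    have hdrop : (applyM (psiW a) U ++ [a]).drop i = applyM (psiW a) (U.drop j) ++ [a] := by
      rw [hsplit j, hij, drop_left]
    rw [hdrop] at hpre
    exact (psiW_prefix a w (U.drop j)).1 hpre
  · rintro ⟨j, hj, rfl⟩
    rw [mem_occs_iff] at hj
    obtain ⟨hjle, hjpre⟩ := hj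
    constructor
    · rw [hsplit j, length_append]
      omega
    · have hdrop : (applyM (psiW a) U ++ [a]).drop (applyM (psiW a) (U.take j)).length =
          applyM (psiW a) (U.drop j) ++ [a] := by
        rw [hsplit j, drop_left]
      rw [hdrop]
      exact (psiW_prefix a w (U.drop j)).2 hjpre

lemma psiW_reverse (a : A) : ∀ (u : List A),
    (applyM (psiW a) u ++ [a]).reverse = applyM (psiW a) u.reverse ++ [a] := by
  intro u
  induction u with
  | nil => simp [applyM_nil]
  | cons c u ih =>
    have key : [a] ++ (psiW a c).reverse = psiW a c ++ [a] := by
      by_cases hc : c = a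
      · rw [hc, psiW_aa]; rfl
      · rw [psiW_ne a c hc]; rfl
    calc (applyM (psiW a) (c :: u) ++ [a]).reverse
        = (applyM (psiW a) u ++ [a]).reverse ++ (psiW a c).reverse := by
          rw [applyM_cons]; simp
      _ = applyM (psiW a) u.reverse ++ ([a] ++ (psiW a c).reverse) := by
          rw [ih, append_assoc]
      _ = applyM (psiW a) u.reverse ++ (psiW a c ++ [a]) := by rw [key]
      _ = applyM (psiW a) (c :: u).reverse ++ [a] := by
          rw [reverse_cons, applyM_append, applyM_cons, applyM_nil, append_nil, append_assoc]

end Aux2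

section Aux3
variable {A : Type*} [DecidableEq A]

inductive PureEp : (A → List A) → Prop
  | perm (π : Equiv.Perm A) : PureEp (fun b => [π b])
  | step (a : A) {ψ : A → List A} : PureEp ψ → PureEp (fun b => applyM (psiW a) (ψ b))

lemma applyM_perm (π : Equiv.Perm A) (v : List A) :
    applyM (fun c => [π c]) v = v.map π := by
  induction v with
  | nil => rfl
  | cons c v ih => rw [applyM_cons, ih]; rfl

lemma psiW_map (π : Equiv.Perm A) (a : A) (v : List A) :
    (applyM (psiW a) v).map π = applyM (psiW (π a)) (v.map π) := by
  induction v with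
  | nil => rfl
  | cons c v ih =>
    rw [applyM_cons, map_append, ih, map_cons, applyM_cons]
    congr 1
    by_cases hc : c = a
    · rw [hc, psiW_aa]; simp [psiW_aa]
    · rw [psiW_ne a c hc, psiW_ne (π a) (π c) (fun e => hc (π.injective e))]
      rfl

lemma pure_map (π : Equiv.Perm A) {ψ : A → List A} (h : PureEp ψ) :
    PureEp (fun b => (ψ b).map π) := by
  induction h with
  | perm π' =>
    have : (fun b => (([π' b] : List A)).map π) = fun b => [(π'.trans π) b] := by
      funext b; rfl
    rw [this]
    exact PureEp.perm (π'.trans π)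
  | @step a ψ' hψ ih =>
    have e : (fun b => (applyM (psiW a) (ψ' b)).map π)
           = fun b => applyM (psiW (π a)) ((ψ' b).map π) := by
      funext b; rw [psiW_map]
    rw [e]
    exact PureEp.step (π a) ih

end Aux3

section Aux4
variable {A : Type*} [DecidableEq A]

lemma pure_comp {ψ₁ ψ₂ : A → List A} (h1 : PureEp ψ₁) (h2 : PureEp ψ₂) :
    PureEp (fun b => applyM ψ₁ (ψ₂ b)) := by
  induction h1 with
  | perm π =>
    have e : (fun b => applyM (fun c => ([π c] : List A)) (ψ₂ b))
           = fun b => (ψ₂ b).map π := by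
      funext b; rw [applyM_perm]
    rw [e]
    exact pure_map π h2
  | @step a ψ' hψ ih =>
    have e : (fun b => applyM (fun c => applyM (psiW a) (ψ' c)) (ψ₂ b))
           = fun b => applyM (psiW a) (applyM ψ' (ψ₂ b)) := by
      funext b; rw [applyM_assoc]
    rw [e]
    exact PureEp.step a ih

lemma pret_perm (π : Equiv.Perm A) : IsPretWithMarker (fun b => [π b]) ([] : List A) := by
  refine ⟨?_, rfl, ?_⟩
  · intro b c h
    exact π.injective (by simpa using h)
  · intro b
    refine ⟨by simp, ?_, by simp⟩
    ext i
    simp only [occs, Finset.mem_filter, Finset.mem_range, Finset.mem_insert,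
      Finset.mem_singleton, append_nil, length_cons, length_nil, take_zero,
      Nat.lt_succ_iff, length, add_zero, and_true, true_and]
    constructor
    · rintro ⟨h1, h2⟩; omega
    · rintro (rfl | rfl) <;> simp

lemma applyM_psiW_ne_nil (a : A) {v : List A} (hv : v ≠ []) :
    (applyM (psiW a) v).length ≠ 0 := by
  cases v with
  | nil => exact absurd rfl hv
  | cons c t =>
    rw [applyM_cons, length_append]
    by_cases hc : c = a
    · rw [hc, psiW_aa]; simp
    · rw [psiW_ne a c hc]; simp

lemma pret_step (a : A) {ψ : A → List A} {w : List A} (h : IsPretWithMarker ψ w) :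
    IsPretWithMarker (fun b => applyM (psiW a) (ψ b)) (applyM (psiW a) w ++ [a]) := by
  obtain ⟨hinj, hwpal, hcond⟩ := h
  refine ⟨?_, ?_, ?_⟩
  · -- injectivity
    intro b c hbc
    simp only at hbc
    have h1 : ψ b <+: ψ c := (psiW_prefix a (ψ b) (ψ c)).1 (by rw [hbc])
    have h2 : ψ c <+: ψ b := (psiW_prefix a (ψ c) (ψ b)).1 (by rw [hbc])
    exact hinj (h1.eq_of_length (Nat.le_antisymm h1.length_le h2.length_le))
  · -- marker palindrome
    rw [psiW_reverse, hwpal]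
  · intro b
    obtain ⟨hpal, hoc, hlen⟩ := hcond b
    have hsplit : applyM (psiW a) (ψ b) ++ (applyM (psiW a) w ++ [a])
        = applyM (psiW a) (ψ b ++ w) ++ [a] := by
      rw [applyM_append, append_assoc]
    refine ⟨?_, ?_, ?_⟩
    · rw [hsplit, psiW_reverse, hpal]
    · ext i
      rw [hsplit]
      simp only [Finset.mem_insert, Finset.mem_singleton]
      rw [occs_step]
      constructor
      · rintro ⟨j, hj, rfl⟩
        rw [hoc] at hj
        simp only [Finset.mem_insert, Finset.mem_singleton] at hj
        rcases hj with rfl | rfl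
        · left; simp [applyM_nil]
        · right
          rw [take_left]
      · rintro (rfl | rfl)
        · refine ⟨0, ?_, by simp [applyM_nil]⟩
          rw [hoc]; simp
        · refine ⟨(ψ b).length, ?_, by rw [take_left]⟩
          rw [hoc]; simp
    · exact applyM_psiW_ne_nil a (fun e => hlen (by rw [e]; rfl))

lemma pret_of_pure {ψ : A → List A} (h : PureEp ψ) : ∃ w, IsPretWithMarker ψ w := by
  induction h with
  | perm π => exact ⟨[], pret_perm π⟩
  | @step a ψ' hψ ih =>
    obtain ⟨w, hw⟩ := ih
    exact ⟨applyM (psiW a) w ++ [a], pret_step a hw⟩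

end Aux4

section Aux5
variable {A : Type*} [DecidableEq A]

lemma conj_word {ψ φ : A → List A} {x : List A} (h : ∀ c, ψ c ++ x = x ++ φ c) :
    ∀ v, applyM ψ v ++ x = x ++ applyM φ v := by
  intro v
  induction v with
  | nil => simp [applyM_nil]
  | cons c v ih =>
    rw [applyM_cons, applyM_cons, append_assoc, ih, ← append_assoc, h c, append_assoc]

lemma ar_conj_pure {φ : A → List A} (hφ : IsAR φ) :
    ∃ (ψ : A → List A) (x : List A), PureEp ψ ∧ ∀ a, ψ a ++ x = x ++ φ a := by
  induction hφ with
  | perm π => exact ⟨_, [], PureEp.perm π, fun a => by simp⟩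
  | psiL a =>
    refine ⟨fun b => applyM (psiW a) [b], [], PureEp.step a (PureEp.perm 1), fun b => ?_⟩
    by_cases hb : b = a
    · simp [applyM_cons, applyM_nil, psiW, hb]
    · simp [applyM_cons, applyM_nil, psiW, hb]
  | psiR a =>
    refine ⟨fun b => applyM (psiW a) [b], [a], PureEp.step a (PureEp.perm 1), fun b => ?_⟩
    by_cases hb : b = a
    · simp [applyM_cons, applyM_nil, psiW, hb]
    · simp [applyM_cons, applyM_nil, psiW, hb]
  | @comp φ₁ φ₂ h1 h2 ih1 ih2 =>
    obtain ⟨ψ₁, x₁, hp1, hc1⟩ := ih1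
    obtain ⟨ψ₂, x₂, hp2, hc2⟩ := ih2
    refine ⟨fun b => applyM ψ₁ (ψ₂ b), applyM ψ₁ x₂ ++ x₁, pure_comp hp1 hp2, fun b => ?_⟩
    calc applyM ψ₁ (ψ₂ b) ++ (applyM ψ₁ x₂ ++ x₁)
        = applyM ψ₁ (ψ₂ b ++ x₂) ++ x₁ := by rw [applyM_append, append_assoc]
      _ = applyM ψ₁ (x₂ ++ φ₂ b) ++ x₁ := by rw [hc2 b]
      _ = applyM ψ₁ x₂ ++ (applyM ψ₁ (φ₂ b) ++ x₁) := by rw [applyM_append, append_assoc]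
      _ = applyM ψ₁ x₂ ++ (x₁ ++ applyM φ₁ (φ₂ b)) := by rw [conj_word hc1]
      _ = (applyM ψ₁ x₂ ++ x₁) ++ applyM φ₁ (φ₂ b) := by rw [append_assoc]

end Aux5

/-- Each Arnoux-Rauzy morphism is conjugated to a morphism in `P_ret`. -/
theorem arnoux_rauzy_conjugate_pret {A : Type*} [Fintype A] [DecidableEq A]
    (φ : A → List A) (hφ : IsAR φ) :
    ∃ (ψ : A → List A) (w x : List A),
      IsPretWithMarker ψ w ∧ ∀ a : A, ψ a ++ x = x ++ φ a := by
  obtain ⟨ψ, x, hp, hc⟩ := ar_conj_pure hφ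
  obtain ⟨w, hw⟩ := pret_of_pure hp
  exact ⟨ψ, w, x, hw, hc⟩
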